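/- Let o be the ring of integers of a non-archimedean local field with maximal ideal p and residue cardinality q, let m ≥ 1, and let P ∈ (o/p^m)[X_1,...,X_n] have degree ≤ d. Suppose that for each y ∈ (o/p^m)^n, at least one of the linear Taylor coefficients of P at y is a unit. Then the number of y ∈ (o/p^m)^n with P(y) = 0 in o/p^m is at most C·q^{mn−m}, with C depending only on n and d. -/

import Mathlib

open Polynomial MvPolynomial

lemma aux_eval_aeval {R : Type*} [CommRing R] {n : ℕ} (χ : Fin n → Polynomial R)
    (P : MvPolynomial (Fin n) R) (t : R) :
    Polynomial.eval t (MvPolynomial.aeval χ P) = MvPolynomial.eval (fun j => (χ j).eval t) P := by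
  have h := MvPolynomial.eval₂_comp_left (Polynomial.evalRingHom t)
    (algebraMap R (Polynomial R)) χ P
  rw [MvPolynomial.aeval_def]
  show (Polynomial.evalRingHom t) (MvPolynomial.eval₂ _ _ _) = _
  rw [h, show (Polynomial.evalRingHom t).comp (algebraMap R (Polynomial R)) = RingHom.id R by
    ext x; simp [Polynomial.algebraMap_eq]]
  rw [MvPolynomial.eval₂_id]
  rfl

lemma aux_natDegree {R : Type*} [CommRing R] {n d : ℕ} (χ : Fin n → Polynomial R)
    (hχ : ∀ j, (χ j).natDegree ≤ 1) (P : MvPolynomial (Fin n) R) (hP : P.totalDegree ≤ d) :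
    (MvPolynomial.aeval χ P).natDegree ≤ d := by
  conv_lhs => rw [P.as_sum, map_sum]
  apply Polynomial.natDegree_sum_le_of_forall_le
  intro σ hσ
  rw [MvPolynomial.aeval_monomial]
  apply le_trans (Polynomial.natDegree_mul_le)
  rw [Polynomial.algebraMap_eq, Polynomial.natDegree_C, zero_add]
  calc (Finsupp.prod σ fun j e => χ j ^ e).natDegree
      ≤ ∑ j ∈ σ.support, (χ j ^ σ j).natDegree := Polynomial.natDegree_prod_le _ _
    _ ≤ ∑ j ∈ σ.support, σ j := by
        apply Finset.sum_le_sum; intro j _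
        exact le_trans Polynomial.natDegree_pow_le
          (by simpa using Nat.mul_le_mul_left (σ j) (hχ j))
    _ ≤ d := le_trans (MvPolynomial.le_totalDegree hσ) hP
open Polynomial MvPolynomial

lemma aux_coeff_one {R : Type*} [CommRing R] {n : ℕ} (i : Fin n) (Q : MvPolynomial (Fin n) R) :
    (MvPolynomial.aeval (fun j => if j = i then (Polynomial.X : Polynomial R) else 0) Q).coeff 1
      = MvPolynomial.coeff (Finsupp.single i 1) Q := by
  set φ : Fin n → Polynomial R := fun j => if j = i then Polynomial.X else 0 with hφ
  have key : ∀ (σ : Fin n →₀ ℕ) (c : R),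
      (MvPolynomial.aeval φ (MvPolynomial.monomial σ c)).coeff 1
        = if σ = Finsupp.single i 1 then c else 0 := by
    intro σ c
    rw [MvPolynomial.aeval_monomial, Polynomial.algebraMap_eq]
    by_cases hs : σ.support ⊆ {i}
    · rw [Finsupp.support_subset_singleton] at hs
      rw [hs]
      rw [Finsupp.prod_single_index (by simp)]
      have : φ i = Polynomial.X := by simp [hφ]
      rw [this, Polynomial.coeff_C_mul, Polynomial.coeff_X_pow]
      have hiff : Finsupp.single i (σ i) = Finsupp.single i 1 ↔ σ i = 1 := by
        constructor
        · intro h; have := DFunLike.congr_fun h i; simpa using this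
        · intro h; rw [h]
      by_cases h1 : σ i = 1
      · simp [h1, hiff, if_pos (hiff.mpr h1)]
      · rw [if_neg (by omega), if_neg (by rw [hiff]; exact h1)]; ring
    · obtain ⟨j, hj, hji⟩ := by
        simpa [Finset.subset_iff] using hs
      have hprod : (Finsupp.prod σ fun j e => φ j ^ e) = 0 := by
        apply Finset.prod_eq_zero (Finsupp.mem_support_iff.mpr hj)
        show φ j ^ σ j = 0
        have : φ j = 0 := by simp [hφ, hji]
        rw [this]
        exact zero_pow hj
      rw [hprod, mul_zero, Polynomial.coeff_zero]
      rw [if_neg]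
      intro h
      rw [h] at hj
      simp only [Finsupp.single_apply] at hj
      exact hj (by rw [if_neg (by exact fun h' => hji h'.symm)])
  conv_lhs => rw [Q.as_sum, map_sum]
  rw [Polynomial.finset_sum_coeff]
  rw [Finset.sum_congr rfl (fun σ hσ => key σ (MvPolynomial.coeff σ Q))]
  rw [Finset.sum_ite_eq' Q.support (Finsupp.single i 1) (fun σ => MvPolynomial.coeff σ Q)]
  by_cases h : Finsupp.single i 1 ∈ Q.support
  · rw [if_pos h]
  · rw [if_neg h]
    exact (MvPolynomial.notMem_support_iff.mp h).symm
open Polynomial MvPolynomial Finset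

lemma aux_eval_divX {R : Type*} [CommRing R] (h : Polynomial R) (δ : R) :
    h.eval δ = δ * (h.divX.eval δ) + h.coeff 0 := by
  conv_lhs => rw [← Polynomial.X_mul_divX_add h]
  rw [Polynomial.eval_add, Polynomial.eval_mul, Polynomial.eval_X, Polynomial.eval_C]

lemma aux_core {R k : Type*} [CommRing R] [Field k] (π : R →+* k)
    (hunit : ∀ x : R, IsUnit x ↔ π x ≠ 0)
    (g : Polynomial R) (δ : R) (hδ : π δ = 0)
    (h0 : g.coeff 0 = 0) (h1 : IsUnit (g.coeff 1)) (hev : g.eval δ = 0) : δ = 0 := by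
  have e2 : g.divX.eval δ = δ * (g.divX.divX.eval δ) + g.coeff 1 := by
    rw [aux_eval_divX g.divX δ, Polynomial.coeff_divX]
  have hu : IsUnit (g.divX.eval δ) := by
    rw [hunit, e2, map_add, map_mul, hδ, zero_mul, zero_add]
    exact (hunit _).mp h1
  have hz : δ * (g.divX.eval δ) = 0 := by
    rw [aux_eval_divX g δ, h0, add_zero] at hev; exact hev
  obtain ⟨u, hu⟩ := hu
  rw [← hu] at hz
  calc δ = (δ * ↑u) * ↑u⁻¹ := by rw [mul_assoc, Units.mul_inv, mul_one]
  _ = 0 := by rw [hz, zero_mul]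
open Polynomial MvPolynomial Finset

section
variable {R : Type*} [CommRing R] {k : Type*} [Field k]

set_option maxHeartbeats 1000000 in
lemma aux_main [Fintype R] [DecidableEq R] [DecidableEq k]
    (π : R →+* k) (hunit : ∀ x : R, IsUnit x ↔ π x ≠ 0)
    (n d : ℕ) (P : MvPolynomial (Fin n) R) (hdeg : P.totalDegree ≤ d)
    (hTay : ∀ y : Fin n → R, ∃ i : Fin n, IsUnit (MvPolynomial.coeff (Finsupp.single i 1)
      (MvPolynomial.bind₁ (fun i => MvPolynomial.C (y i) + MvPolynomial.X i) P))) :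
    {y : Fin n → R | MvPolynomial.eval y P = 0}.ncard ≤ n * d * (Fintype.card R) ^ (n - 1) := by
  classical
  -- the shifted (Taylor) polynomial in one direction
  set gp : (Fin n → R) → Fin n → Polynomial R := fun y i =>
    MvPolynomial.aeval (fun j => Polynomial.C (y j) + if j = i then Polynomial.X else 0) P
    with hgp
  have hg_coeff1 : ∀ y i, (gp y i).coeff 1 = MvPolynomial.coeff (Finsupp.single i 1)
      (MvPolynomial.bind₁ (fun j => MvPolynomial.C (y j) + MvPolynomial.X j) P) := by
    intro y i
    have hfun : (fun j => MvPolynomial.aeval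
          (fun j' => if j' = i then (Polynomial.X : Polynomial R) else 0)
          (MvPolynomial.C (y j) + MvPolynomial.X j))
        = (fun j => Polynomial.C (y j) + if j = i then (Polynomial.X : Polynomial R) else 0) :=
      funext fun j => by
        rw [map_add, MvPolynomial.aeval_C, MvPolynomial.aeval_X, Polynomial.algebraMap_eq]
    have h : gp y i = MvPolynomial.aeval (fun j => if j = i then (Polynomial.X : Polynomial R) else 0)
        (MvPolynomial.bind₁ (fun j => MvPolynomial.C (y j) + MvPolynomial.X j) P) := by
      rw [MvPolynomial.aeval_bind₁, hfun, hgp]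
    rw [h, aux_coeff_one]
  have hg_eval : ∀ y i t, (gp y i).eval t
      = MvPolynomial.eval (fun j => y j + if j = i then t else 0) P := by
    intro y i t
    rw [hgp]
    rw [aux_eval_aeval]
    have hfun : (fun j => Polynomial.eval t (Polynomial.C (y j) + if j = i then Polynomial.X else 0))
        = (fun j => y j + if j = i then t else 0) :=
      funext fun j => by by_cases h : j = i <;> simp [h]
    rw [hfun]
  have hg_deg : ∀ y i, (gp y i).natDegree ≤ d := by
    intro y i
    refine aux_natDegree _ (fun j => ?_) P hdeg
    by_cases h : j = i
    · simp only [h, if_pos rfl]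
      exact le_trans (Polynomial.natDegree_add_le _ _)
        (by simp [Polynomial.natDegree_C, Polynomial.natDegree_X_le])
    · simp [h, Polynomial.natDegree_C]
  -- reduce to Finset counting
  rcases Nat.eq_zero_or_pos n with hn | hn
  · subst hn
    have : {y : Fin 0 → R | MvPolynomial.eval y P = 0} = ∅ := by
      ext y
      simp only [Set.mem_setOf_eq, Set.mem_empty_iff_false, iff_false]
      intro _
      obtain ⟨i, _⟩ := hTay y
      exact i.elim0
    simp [this]
  set T : Finset (Fin n → R) := Finset.univ.filter (fun y => MvPolynomial.eval y P = 0) with hTdef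
  have hncard : {y : Fin n → R | MvPolynomial.eval y P = 0}.ncard = T.card := by
    rw [Set.ncard_eq_toFinset_card']
    congr 1
    ext y
    simp [hTdef]
  rw [hncard]
  set Ti : Fin n → Finset (Fin n → R) := fun i => Finset.univ.filter
    (fun y => MvPolynomial.eval y P = 0 ∧ IsUnit (MvPolynomial.coeff (Finsupp.single i 1)
      (MvPolynomial.bind₁ (fun j => MvPolynomial.C (y j) + MvPolynomial.X j) P))) with hTi
  have hsub : T ⊆ Finset.univ.biUnion Ti := by
    intro y hy
    rw [hTdef, Finset.mem_filter] at hy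
    obtain ⟨i, hi⟩ := hTay y
    exact Finset.mem_biUnion.mpr ⟨i, Finset.mem_univ i, by
      rw [hTi]; exact Finset.mem_filter.mpr ⟨Finset.mem_univ y, hy.2, hi⟩⟩
  have hfiber : ∀ i : Fin n, ∀ w : {j : Fin n // j ≠ i} → R,
      ((Ti i).filter (fun y => (fun j : {j : Fin n // j ≠ i} => y j.1) = w)).card ≤ d := by
    intro i w
    set F := (Ti i).filter (fun y => (fun j : {j : Fin n // j ≠ i} => y j.1) = w) with hF
    rcases F.eq_empty_or_nonempty with he | ⟨y₀, hy₀⟩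
    · simp [he]
    have hy₀' := hy₀
    rw [hF, Finset.mem_filter, hTi, Finset.mem_filter] at hy₀'
    obtain ⟨⟨-, hy₀ev, hy₀u⟩, hy₀w⟩ := hy₀'
    set g := gp y₀ i with hgdef
    have hg1 : IsUnit (g.coeff 1) := by rw [hgdef, hg_coeff1]; exact hy₀u
    have hgmapne : g.map π ≠ 0 := by
      intro h
      have h2 : π (g.coeff 1) = 0 := by rw [← Polynomial.coeff_map, h, Polynomial.coeff_zero]
      exact ((hunit _).mp hg1) h2
    -- facts for elements of the fiber
    have hmem : ∀ y ∈ F, MvPolynomial.eval y P = 0 ∧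
        IsUnit ((gp y i).coeff 1) ∧ (∀ j, j ≠ i → y j = y₀ j) := by
      intro y hy
      rw [hF, Finset.mem_filter, hTi, Finset.mem_filter] at hy
      obtain ⟨⟨-, hev, hu⟩, hw⟩ := hy
      refine ⟨hev, by rw [hg_coeff1]; exact hu, fun j hj => ?_⟩
      have := congrFun (hw.trans hy₀w.symm) ⟨j, hj⟩
      exact this
    have hrep : ∀ y ∈ F, ∀ t : R, y i = y₀ i + t →
        (fun j => y₀ j + if j = i then t else 0) = y := by
      intro y hy t ht
      funext j
      by_cases h : j = i
      · subst h; simp [ht]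
      · simp [h, ((hmem y hy).2.2 j h)]
    -- the injection into the roots of the reduction of g
    apply le_trans (Finset.card_le_card_of_injOn (fun y => π (y i - y₀ i))
      (fun y hy => ?_) (fun y hy y' hy' hππ => ?_))
    · calc (g.map π).roots.toFinset.card ≤ Multiset.card (g.map π).roots :=
          (g.map π).roots.toFinset_card_le
      _ ≤ (g.map π).natDegree := Polynomial.card_roots' _
      _ ≤ g.natDegree := Polynomial.natDegree_map_le
      _ ≤ d := by rw [hgdef]; exact hg_deg y₀ i
    -- maps to roots
    · have hev : g.eval (y i - y₀ i) = 0 := by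
        rw [hgdef, hg_eval, hrep y hy (y i - y₀ i) (by ring)]
        exact (hmem y hy).1
      have : (g.map π).eval (π (y i - y₀ i)) = 0 := by
        rw [Polynomial.eval_map, Polynomial.eval₂_at_apply, hev, map_zero]
      exact Multiset.mem_toFinset.mpr ((Polynomial.mem_roots hgmapne).mpr this)
    -- injectivity
    · have hππ' : π (y i - y₀ i) = π (y' i - y₀ i) := hππ
      have hδ : π (y' i - y i) = 0 := by
        have h2 : π (y' i - y₀ i) - π (y i - y₀ i) = 0 := by rw [hππ', sub_self]
        rw [← map_sub] at h2
        simpa using h2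
      set h := gp y i with hhdef
      have hh0 : h.coeff 0 = 0 := by
        rw [Polynomial.coeff_zero_eq_eval_zero, hhdef, hg_eval]
        have : (fun j => y j + if j = i then (0:R) else 0) = y := by funext j; simp
        rw [this]
        exact (hmem y hy).1
      have hh1 : IsUnit (h.coeff 1) := (hmem y hy).2.1
      have hhev : h.eval (y' i - y i) = 0 := by
        rw [hhdef, hg_eval]
        have : (fun j => y j + if j = i then (y' i - y i) else 0) = y' := by
          funext j
          by_cases hji : j = i
          · subst hji; simp
          · rw [if_neg hji, add_zero, (hmem y hy).2.2 j hji]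
            exact ((hmem y' hy').2.2 j hji).symm
        rw [this]
        exact (hmem y' hy').1
      have hzero := aux_core π hunit h (y' i - y i) hδ hh0 hh1 hhev
      have hyi : y' i = y i := sub_eq_zero.mp hzero
      funext j
      by_cases hji : j = i
      · subst hji; exact hyi.symm
      · rw [(hmem y hy).2.2 j hji, (hmem y' hy').2.2 j hji]
  -- count
  have hTi_card : ∀ i : Fin n, (Ti i).card ≤ d * (Fintype.card R) ^ (n - 1) := by
    intro i
    rw [Finset.card_eq_sum_card_fiberwise
      (f := fun y => (fun j : {j : Fin n // j ≠ i} => y j.1)) (t := Finset.univ)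
      (fun y _ => Finset.mem_univ _)]
    calc ∑ w : {j : Fin n // j ≠ i} → R, ((Ti i).filter
          (fun y => (fun j : {j : Fin n // j ≠ i} => y j.1) = w)).card
        ≤ ∑ w : {j : Fin n // j ≠ i} → R, d := Finset.sum_le_sum (fun w _ => hfiber i w)
      _ = (Fintype.card ({j : Fin n // j ≠ i} → R)) * d := by
          rw [Finset.sum_const, smul_eq_mul, Finset.card_univ]
      _ = d * (Fintype.card R) ^ (n - 1) := by
          rw [Fintype.card_fun]
          rw [show Fintype.card {j : Fin n // j ≠ i} = n - 1 by
            rw [Fintype.card_subtype_compl, Fintype.card_fin, Fintype.card_subtype_eq]]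
          ring
  calc T.card ≤ (Finset.univ.biUnion Ti).card := Finset.card_le_card hsub
    _ ≤ ∑ i : Fin n, (Ti i).card := Finset.card_biUnion_le
    _ ≤ ∑ i : Fin n, d * (Fintype.card R) ^ (n - 1) :=
        Finset.sum_le_sum (fun i _ => hTi_card i)
    _ = n * d * (Fintype.card R) ^ (n - 1) := by
        rw [Finset.sum_const, smul_eq_mul, Finset.card_univ, Fintype.card_fin]; ring

end

/-- Uniform bound for polynomial congruences with a unit linear Taylor coefficient.  For all
`n` and `d` there is a constant `C = C(n,d)` such that: if `o` is the ring of integers of a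
non-archimedean local field (a discrete valuation ring) with maximal ideal `p` and residue
cardinality `q`, `m ≥ 1`, and `P ∈ (o/p^m)[X_1,…,X_n]` has degree `≤ d` and at each point
`y ∈ (o/p^m)^n` some linear Taylor coefficient of `P` at `y` is a unit, then the number of
solutions of `P(y) = 0` in `(o/p^m)^n` is at most `C · q^{mn - m}`. -/
theorem stmt_17 (n d : ℕ) :
    ∃ C : ℕ, ∀ (o : Type) [CommRing o] [IsDomain o] [IsDiscreteValuationRing o]
      [Fintype (IsLocalRing.ResidueField o)] (q : ℕ),
      Fintype.card (IsLocalRing.ResidueField o) = q →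
      ∀ (m : ℕ), 1 ≤ m →
      ∀ [Fintype (o ⧸ (IsLocalRing.maximalIdeal o ^ m))],
      ∀ P : MvPolynomial (Fin n) (o ⧸ (IsLocalRing.maximalIdeal o ^ m)),
        P.totalDegree ≤ d →
        (∀ y : Fin n → o ⧸ (IsLocalRing.maximalIdeal o ^ m),
          ∃ i : Fin n, IsUnit (MvPolynomial.coeff (Finsupp.single i 1)
            (MvPolynomial.bind₁
              (fun i => MvPolynomial.C (y i) + MvPolynomial.X i) P))) →
        Set.ncard {y : Fin n → o ⧸ (IsLocalRing.maximalIdeal o ^ m) |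
            MvPolynomial.eval y P = 0} ≤ C * q ^ (m * n - m) := by
  classical
  refine ⟨n * d, ?_⟩
  intro o _ _ _ F q hq m hm Fm P hdeg hTay
  have hm0 : m ≠ 0 := by omega
  let π : (o ⧸ (IsLocalRing.maximalIdeal o) ^ m) →+* IsLocalRing.ResidueField o :=
    Ideal.Quotient.factor (S := (IsLocalRing.maximalIdeal o) ^ m) (T := IsLocalRing.maximalIdeal o) (Ideal.pow_le_self hm0)
  have hunit : ∀ x : o ⧸ (IsLocalRing.maximalIdeal o) ^ m, IsUnit x ↔ π x ≠ 0 := by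
    intro x
    obtain ⟨a, rfl⟩ := Ideal.Quotient.mk_surjective x
    have hπ : π (Ideal.Quotient.mk ((IsLocalRing.maximalIdeal o) ^ m) a) = Ideal.Quotient.mk (IsLocalRing.maximalIdeal o) a :=
      Ideal.Quotient.factor_mk _ _
    rw [hπ]; change _ ↔ ¬ ((Ideal.Quotient.mk (IsLocalRing.maximalIdeal o) a : o ⧸ IsLocalRing.maximalIdeal o) = 0); rw [Ideal.Quotient.eq_zero_iff_mem]
    constructor
    · intro hx ha
      obtain ⟨b, hb⟩ := isUnit_iff_exists_inv.mp hx
      obtain ⟨b', rfl⟩ := Ideal.Quotient.mk_surjective b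
      have h1 : a * b' - 1 ∈ (IsLocalRing.maximalIdeal o) ^ m := (Ideal.Quotient.eq_zero_iff_mem).mp
        (by rw [map_sub, map_mul, hb, map_one, sub_self])
      have h2 : a * b' - 1 ∈ (IsLocalRing.maximalIdeal o) := Ideal.pow_le_self hm0 h1
      have h3 : (1 : o) ∈ (IsLocalRing.maximalIdeal o) := by
        have h4 := (IsLocalRing.maximalIdeal o).sub_mem (Ideal.mul_mem_right b' (IsLocalRing.maximalIdeal o) ha) h2
        simpa using h4
      exact (IsLocalRing.maximalIdeal.isMaximal o).ne_top ((Ideal.eq_top_iff_one (IsLocalRing.maximalIdeal o)).mpr h3)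
    · intro ha
      have : IsUnit a := by
        by_contra hnu
        exact ha ((IsLocalRing.mem_maximalIdeal (x := a)).mpr hnu)
      exact this.map (Ideal.Quotient.mk ((IsLocalRing.maximalIdeal o) ^ m))
  have hb := aux_main π hunit n d P hdeg hTay
  have hcard : Fintype.card (o ⧸ (IsLocalRing.maximalIdeal o) ^ m) = q ^ m := by
    have F' : Fintype (o ⧸ (IsLocalRing.maximalIdeal o)) := F
    have h := cardQuot_pow_of_prime (P := (IsLocalRing.maximalIdeal o)) (IsDiscreteValuationRing.not_a_field o) (i := m)
    rw [Submodule.cardQuot_apply, Submodule.cardQuot_apply, Nat.card_eq_fintype_card,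
      Nat.card_eq_fintype_card] at h
    rw [h, ← hq]
    exact congrArg (· ^ m) (Fintype.card_congr (Equiv.refl _))
  rw [hcard] at hb
  have harith : m * (n - 1) = m * n - m := by
    cases n with
    | zero => simp
    | succ n' => simp [Nat.mul_succ]
  calc Set.ncard {y : Fin n → o ⧸ ((IsLocalRing.maximalIdeal o) ^ m) | MvPolynomial.eval y P = 0}
      ≤ n * d * (q ^ m) ^ (n - 1) := hb
    _ = n * d * q ^ (m * n - m) := by rw [← pow_mul, harith]
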